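/- Let I ⊆ ℝ be an open interval, c ∈ ℝ, f : ℝ → ℝ twice differentiable on I with f(t) > 0 on I, and λ : ℝ → ℝ differentiable on I with λ(t) ≠ 0 and f(t)²λ(t)² = f'(t)² − c for all t ∈ I. Let θ : ℝ → ℝ be differentiable on I with sinh(θ(t)) ≠ 0 and cosh(θ(t))/sinh(θ(t)) = f'(t)/(f(t)·λ(t)) for all t ∈ I. Then the function t ↦ sinh(θ(t))/λ(t) is differentiable on I and its derivative equals cosh(θ(t)) for all t ∈ I. -/

import Mathlib

/-- With `f²λ² = f'² − c` on the open interval `I` (`f > 0`, `λ ≠ 0`,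
`λ` differentiable) and `coth θ = cosh θ/sinh θ = f'/(f·λ)` with `sinh θ ≠ 0` for a
differentiable `θ`, the function `sinh θ/λ` is differentiable on `I` with derivative
`cosh θ`. -/
theorem stmt_17 (a b c : ℝ) (f f' f'' lam θ : ℝ → ℝ)
    (hf : ∀ t ∈ Set.Ioo a b, HasDerivAt f (f' t) t)
    (hf' : ∀ t ∈ Set.Ioo a b, HasDerivAt f' (f'' t) t)
    (hpos : ∀ t ∈ Set.Ioo a b, 0 < f t)
    (hlamdiff : ∀ t ∈ Set.Ioo a b, DifferentiableAt ℝ lam t)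
    (hlam0 : ∀ t ∈ Set.Ioo a b, lam t ≠ 0)
    (hrel : ∀ t ∈ Set.Ioo a b, f t ^ 2 * lam t ^ 2 = f' t ^ 2 - c)
    (hθdiff : ∀ t ∈ Set.Ioo a b, DifferentiableAt ℝ θ t)
    (hsinh : ∀ t ∈ Set.Ioo a b, Real.sinh (θ t) ≠ 0)
    (hcoth : ∀ t ∈ Set.Ioo a b,
      Real.cosh (θ t) / Real.sinh (θ t) = f' t / (f t * lam t)) :
    ∀ t ∈ Set.Ioo a b,
      HasDerivAt (fun s => Real.sinh (θ s) / lam s) (Real.cosh (θ t)) t := by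
  intro t ht
  set g : ℝ → ℝ := fun s => Real.sinh (θ s) / lam s with hg
  -- key identity: c * sinh² = f² λ² on the interval
  have key : ∀ s ∈ Set.Ioo a b, c * Real.sinh (θ s) ^ 2 = f s ^ 2 * lam s ^ 2 := by
    intro s hs
    have h1 := hcoth s hs
    have h2 := hrel s hs
    have hs0 := hsinh s hs
    have hf0 := (hpos s hs).ne'
    have hl0 := hlam0 s hs
    have hcosh : Real.cosh (θ s) = Real.sinh (θ s) * f' s / (f s * lam s) := by
      field_simp at h1 ⊢
      linarith [h1]
    have hid : Real.cosh (θ s) ^ 2 - Real.sinh (θ s) ^ 2 = 1 :=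
      Real.cosh_sq_sub_sinh_sq (θ s)
    rw [hcosh] at hid
    field_simp at hid
    nlinarith [hid, h2, sq_nonneg (Real.sinh (θ s)), sq_nonneg (f s * lam s)]
  -- c > 0
  have hc : 0 < c := by
    have := key t ht
    have h1 : 0 < f t ^ 2 * lam t ^ 2 :=
      mul_pos (pow_pos (hpos t ht) 2) (pow_two_pos_of_ne_zero (hlam0 t ht))
    nlinarith [sq_nonneg (Real.sinh (θ t)), this]
  set r := Real.sqrt c with hr
  have hr0 : 0 < r := Real.sqrt_pos.mpr hc
  have hr2 : r ^ 2 = c := Real.sq_sqrt hc.le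
  -- (g s)² = f s² / c on the interval
  have hg2 : ∀ s ∈ Set.Ioo a b, g s ^ 2 = f s ^ 2 / c := by
    intro s hs
    have := key s hs
    have hl0 := hlam0 s hs
    simp only [hg, div_pow]
    field_simp
    nlinarith [this]
  have hft : (0:ℝ) < f t := hpos t ht
  set ε : ℝ := g t * r / f t with hε
  have hgt : g t = ε * f t / r := by
    rw [hε, div_mul_cancel₀ _ hft.ne', mul_div_cancel_right₀ _ hr0.ne']
  -- continuity facts
  have hgdiff : DifferentiableAt ℝ g t :=
    ((hθdiff t ht).sinh).div (hlamdiff t ht) (hlam0 t ht)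
  have hfc : ContinuousAt f t := (hf t ht).differentiableAt.continuousAt
  have hgt0 : g t ≠ 0 := div_ne_zero (hsinh t ht) (hlam0 t ht)
  -- eventually g = ε * f / r
  have hev : (fun s => ε * f s / r) =ᶠ[nhds t] g := by
    have hcont : ContinuousAt (fun s => g s + ε * f s / r) t := by
      exact (hgdiff.continuousAt).add ((hfc.const_mul ε).div_const r)
    have hne : (fun s => g s + ε * f s / r) t ≠ 0 := by
      simp only [← hgt]
      intro h
      apply hgt0
      linarith [h]
    have hev1 : ∀ᶠ s in nhds t, g s + ε * f s / r ≠ 0 :=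
      hcont.eventually_ne hne
    have hev2 : ∀ᶠ s in nhds t, s ∈ Set.Ioo a b := isOpen_Ioo.eventually_mem ht
    filter_upwards [hev1, hev2] with s h1 h2
    have hq := hg2 s h2
    have hε2 : ε ^ 2 = 1 := by
      have hqt := (eq_div_iff hc.ne').mp (hg2 t ht)
      rw [hε, div_pow, mul_pow, hr2, hqt, div_self (pow_ne_zero 2 hft.ne')]
    have h3 : (ε * f s / r) ^ 2 = f s ^ 2 / c := by
      rw [div_pow, mul_pow, hε2, one_mul, hr2]
    have hprod : (g s - ε * f s / r) * (g s + ε * f s / r) = 0 := by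
      calc (g s - ε * f s / r) * (g s + ε * f s / r)
          = g s ^ 2 - (ε * f s / r) ^ 2 := by ring
        _ = 0 := by rw [hq, h3]; ring
    have := mul_eq_zero.mp hprod
    rcases this with h | h
    · linarith [h]
    · exact absurd h h1
  -- derivative of ε * f / r
  have hd : HasDerivAt (fun s => ε * f s / r) (ε * f' t / r) t := by
    have := ((hf t ht).const_mul ε).div_const r
    simpa using this
  have hgd : HasDerivAt g (ε * f' t / r) t := hd.congr_of_eventuallyEq hev.symm
  -- identify the derivative with cosh θ t
  have hval : ε * f' t / r = Real.cosh (θ t) := by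
    have h1 := hcoth t ht
    have hs0 := hsinh t ht
    have hl0 := hlam0 t ht
    have hcosh : Real.cosh (θ t) = Real.sinh (θ t) * f' t / (f t * lam t) := by
      field_simp at h1 ⊢
      linarith [h1]
    have hsg : Real.sinh (θ t) = g t * lam t := by
      exact (div_mul_cancel₀ (Real.sinh (θ t)) hl0).symm
    rw [hcosh, hsg, hgt]
    field_simp
  rw [← hval]
  exact hgd
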